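/- arXiv:1104.2271 — 2 statements merged into one kernel-verified Lean document; each statement's English description precedes it below -/
import Mathlib

section
/- Let ρ₁, ρ₂, ρ₃ be density matrices of the same dimension d, and write Fᵢⱼ = F(ρᵢ; ρⱼ) for the fidelity. Then F₁₂ + F₁₃ + F₂₃ ≤ 1 + 2 √(F₁₂ F₁₃ F₂₃). -/
open scoped Classical

open Matrix ComplexOrder

/-- The positive semidefinite square root of a matrix: the unique PSD square root
when the matrix is PSD, and `0` otherwise. -/
noncomputable def msqrt {n : Type*} [Fintype n] [DecidableEq n]
    (A : Matrix n n ℂ) : Matrix n n ℂ :=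
  if h : A.PosSemidef then
    (h.1.eigenvectorUnitary : Matrix n n ℂ) * diagonal ((↑) ∘ (√·) ∘ h.1.eigenvalues) *
      (star h.1.eigenvectorUnitary : Matrix n n ℂ) else 0

/-- Fidelity between two states: `F(ρ₁; ρ₂) = (tr √(√ρ₁ · ρ₂ · √ρ₁))²`. -/
noncomputable def fidelity {n : Type*} [Fintype n] [DecidableEq n]
    (ρ₁ ρ₂ : Matrix n n ℂ) : ℝ :=
  ((msqrt (msqrt ρ₁ * ρ₂ * msqrt ρ₁)).trace).re ^ 2


namespace Matrix.PosSemidef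

@[reducible] noncomputable def sqrt {n : Type*} [Fintype n] [DecidableEq n] {A : Matrix n n ℂ}
    (h : A.PosSemidef) : Matrix n n ℂ :=
  (h.1.eigenvectorUnitary : Matrix n n ℂ) * diagonal ((↑) ∘ (√·) ∘ h.1.eigenvalues) *
    (star h.1.eigenvectorUnitary : Matrix n n ℂ)

open scoped MatrixOrder

lemma sqrt_eq_cfc {n : Type*} [Fintype n] [DecidableEq n] {A : Matrix n n ℂ}
    (h : A.PosSemidef) : h.sqrt = CFC.sqrt A := by
  rw [CFC.sqrt_eq_cfc, cfc_nnreal_eq_real _ A, h.1.cfc_eq, IsHermitian.cfc,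
    Unitary.conjStarAlgAut_apply, sqrt]
  congr 3
  funext i
  simp [h.eigenvalues_nonneg i]

lemma posSemidef_sqrt {n : Type*} [Fintype n] [DecidableEq n] {A : Matrix n n ℂ}
    (h : A.PosSemidef) : h.sqrt.PosSemidef := by
  rw [sqrt_eq_cfc]; exact (CFC.sqrt_nonneg A).posSemidef

lemma sqrt_mul_self {n : Type*} [Fintype n] [DecidableEq n] {A : Matrix n n ℂ}
    (h : A.PosSemidef) : h.sqrt * h.sqrt = A := by
  rw [sqrt_eq_cfc]; exact CFC.sqrt_mul_sqrt_self A h.nonneg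

lemma eq_sqrt_of_sq_eq {n : Type*} [Fintype n] [DecidableEq n] {B : Matrix n n ℂ}
    (hB : B.PosSemidef) {A : Matrix n n ℂ} (hA : A.PosSemidef) (h : B ^ 2 = A) :
    B = hA.sqrt := by
  subst h
  rw [sqrt_eq_cfc, pow_two, CFC.sqrt_mul_self B hB.nonneg]

end Matrix.PosSemidef

namespace FidAux

variable {d : ℕ}

/-- trace norm -/
noncomputable def tnorm (X : Matrix (Fin d) (Fin d) ℂ) : ℝ :=
  ((msqrt (Xᴴ * X)).trace).re

lemma diag_herm (σ : Fin d → ℝ) :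
    (Matrix.diagonal (fun i => (σ i : ℂ)))ᴴ = Matrix.diagonal (fun i => (σ i : ℂ)) := by
  ext i j
  simp only [Matrix.conjTranspose_apply, Matrix.diagonal_apply]
  split_ifs with h h' h'
  · subst h; exact Complex.conj_ofReal _
  · simp_all
  · exact absurd h'.symm h
  · simp

lemma tnorm_svd {W V : Matrix (Fin d) (Fin d) ℂ} (hW : Wᴴ * W = 1)
    (hV : Vᴴ * V = 1) {σ : Fin d → ℝ} (hσ : ∀ i, 0 ≤ σ i) :
    tnorm (W * Matrix.diagonal (fun i => (σ i : ℂ)) * Vᴴ) = ∑ i, σ i := by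
  set D : Matrix (Fin d) (Fin d) ℂ := Matrix.diagonal (fun i => (σ i : ℂ)) with hD
  set X := W * D * Vᴴ with hX
  have hDps : D.PosSemidef :=
    Matrix.PosSemidef.diagonal (fun i => Complex.zero_le_real.mpr (hσ i))
  have hXXps : (Xᴴ * X).PosSemidef := Matrix.posSemidef_conjTranspose_mul_self X
  have hP : (V * D * Vᴴ).PosSemidef := hDps.mul_mul_conjTranspose_same V
  have hP2 : (V * D * Vᴴ) ^ 2 = Xᴴ * X := by
    rw [pow_two, hX, Matrix.conjTranspose_mul, Matrix.conjTranspose_mul, diag_herm,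
      Matrix.conjTranspose_conjTranspose]
    simp only [Matrix.mul_assoc]
    rw [← Matrix.mul_assoc Wᴴ W, hW, Matrix.one_mul, ← Matrix.mul_assoc Vᴴ V, hV,
      Matrix.one_mul]
  have hmsqrt : msqrt (Xᴴ * X) = V * D * Vᴴ := by
    rw [msqrt, dif_pos hXXps]
    exact (hP.eq_sqrt_of_sq_eq hXXps hP2).symm
  rw [tnorm, hmsqrt, Matrix.trace_mul_cycle, hV, Matrix.one_mul, hD, Matrix.trace_diagonal,
    ← Complex.ofReal_sum]
  exact Complex.ofReal_re _


lemma exists_svd (X : Matrix (Fin d) (Fin d) ℂ) :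
    ∃ (W V : Matrix (Fin d) (Fin d) ℂ) (σ : Fin d → ℝ),
      Wᴴ * W = 1 ∧ W * Wᴴ = 1 ∧ Vᴴ * V = 1 ∧ V * Vᴴ = 1 ∧ (∀ i, 0 ≤ σ i) ∧
      X = W * Matrix.diagonal (fun i => (σ i : ℂ)) * Vᴴ := by
  have hH : (Xᴴ * X).PosSemidef := Matrix.posSemidef_conjTranspose_mul_self X
  have hHerm : (Xᴴ * X).IsHermitian := hH.isHermitian
  set lam : Fin d → ℝ := hHerm.eigenvalues with hlamdef
  have hlam : ∀ i, 0 ≤ lam i := fun i => hH.eigenvalues_nonneg i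
  set V : Matrix (Fin d) (Fin d) ℂ := (hHerm.eigenvectorUnitary : Matrix (Fin d) (Fin d) ℂ) with hVdef
  have hV1 : Vᴴ * V = 1 := by
    rw [← Matrix.star_eq_conjTranspose]
    exact Matrix.mem_unitaryGroup_iff'.mp hHerm.eigenvectorUnitary.2
  have hV2 : V * Vᴴ = 1 := by
    rw [← Matrix.star_eq_conjTranspose]
    exact Matrix.mem_unitaryGroup_iff.mp hHerm.eigenvectorUnitary.2
  set σ : Fin d → ℝ := fun i => Real.sqrt (lam i) with hσdef
  have hσ : ∀ i, 0 ≤ σ i := fun i => Real.sqrt_nonneg _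
  set Y := X * V with hYdef
  have hYY : Yᴴ * Y = Matrix.diagonal (fun i => (lam i : ℂ)) := by
    rw [hYdef, Matrix.conjTranspose_mul]
    have h1 : Vᴴ * Xᴴ * (X * V) = Vᴴ * (Xᴴ * X) * V := by
      simp only [Matrix.mul_assoc]
    rw [h1]
    have h2 := hHerm.conjStarAlgAut_star_eigenvectorUnitary
    rw [Unitary.conjStarAlgAut_star_apply, Matrix.star_eq_conjTranspose] at h2
    rw [h2]
    rfl
  have key : ∀ i j, (∑ k, (starRingEnd ℂ) (Y k i) * Y k j)
      = if i = j then (lam i : ℂ) else 0 := by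
    intro i j
    have h := congrArg (fun M => M i j) hYY
    simpa [Matrix.mul_apply, Matrix.conjTranspose_apply, Matrix.diagonal_apply] using h
  set s : Set (Fin d) := {i | lam i ≠ 0} with hsdef
  set u : Fin d → EuclideanSpace ℂ (Fin d) :=
    fun j => (WithLp.equiv 2 (Fin d → ℂ)).symm (((σ j : ℂ))⁻¹ • fun k => Y k j) with hudef
  have horth : Orthonormal ℂ (s.restrict u) := by
    rw [orthonormal_iff_ite]
    rintro ⟨i, hi⟩ ⟨j, hj⟩
    have hsum : (inner ℂ (s.restrict u ⟨i, hi⟩) (s.restrict u ⟨j, hj⟩) : ℂ)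
        = ((σ i : ℂ))⁻¹ * ((σ j : ℂ))⁻¹ * ∑ k, (starRingEnd ℂ) (Y k i) * Y k j := by
      rw [PiLp.inner_apply]
      rw [Finset.mul_sum]
      apply Finset.sum_congr rfl
      intro k _
      simp only [Set.restrict, Set.restrict_apply, hudef, WithLp.equiv_symm_apply, PiLp.toLp_apply,
        WithLp.ofLp_toLp, Pi.smul_apply,
        smul_eq_mul, RCLike.inner_apply, _root_.map_mul, map_inv₀, Complex.conj_ofReal]
      ring
    rw [hsum, key i j]
    by_cases hij : i = j
    · subst hij
      have hσi : σ i ≠ 0 := by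
        have : 0 < lam i := lt_of_le_of_ne (hlam i) (Ne.symm hi)
        positivity
      have hmul : lam i = σ i * σ i := (Real.mul_self_sqrt (hlam i)).symm
      rw [if_pos rfl, if_pos rfl, hmul]
      push_cast
      have hne : ((σ i : ℂ)) ≠ 0 := by exact_mod_cast hσi
      field_simp
    · rw [if_neg hij, if_neg (by simpa [Subtype.mk.injEq] using hij)]
      ring
  have hcard : Module.finrank ℂ (EuclideanSpace ℂ (Fin d)) = Fintype.card (Fin d) := by
    simp
  obtain ⟨b, hb⟩ := horth.exists_orthonormalBasis_extension_of_card_eq hcard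
  set W : Matrix (Fin d) (Fin d) ℂ :=
    (EuclideanSpace.basisFun (Fin d) ℂ).toBasis.toMatrix b.toBasis with hWdef
  have hWmem : W ∈ Matrix.unitaryGroup (Fin d) ℂ :=
    (EuclideanSpace.basisFun (Fin d) ℂ).toMatrix_orthonormalBasis_mem_unitary b
  have hW1 : Wᴴ * W = 1 := by
    rw [← Matrix.star_eq_conjTranspose]
    exact Matrix.mem_unitaryGroup_iff'.mp hWmem
  have hW2 : W * Wᴴ = 1 := by
    rw [← Matrix.star_eq_conjTranspose]
    exact Matrix.mem_unitaryGroup_iff.mp hWmem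
  have hWapp : ∀ i j, W i j = b j i := fun i j => rfl
  have main : X * V = W * Matrix.diagonal (fun i => (σ i : ℂ)) := by
    ext i j
    rw [Matrix.mul_diagonal]
    by_cases hj : lam j = 0
    · have hσj : σ j = 0 := by rw [hσdef]; simp [hj]
      have hyj : Y i j = 0 := by
        have h0 := key j j
        rw [if_pos rfl, hj] at h0
        have h1 : ∀ k, (starRingEnd ℂ) (Y k j) * Y k j = (Complex.normSq (Y k j) : ℂ) := by
          intro k
          rw [Complex.normSq_eq_conj_mul_self]
        have h2 : (∑ k, (Complex.normSq (Y k j) : ℝ)) = 0 := by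
          have := congrArg Complex.re h0
          simpa [h1, Complex.ofReal_sum] using this
        have h3 := (Finset.sum_eq_zero_iff_of_nonneg
          (fun k _ => Complex.normSq_nonneg (Y k j))).mp h2 i (Finset.mem_univ i)
        exact Complex.normSq_eq_zero.mp h3
      show Y i j = W i j * (σ j : ℂ)
      rw [hyj, hσj]
      simp
    · have hbj := hb j hj
      have hσj : σ j ≠ 0 := by
        have : 0 < lam j := lt_of_le_of_ne (hlam j) (Ne.symm hj)
        rw [hσdef]; positivity
      have hW' : W i j = ((σ j : ℂ))⁻¹ * Y i j := by
        rw [hWapp, hbj, hudef]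
        simp [WithLp.equiv_symm_apply, PiLp.toLp_apply]
      show Y i j = W i j * (σ j : ℂ)
      rw [hW']
      have : ((σ j : ℂ)) ≠ 0 := by exact_mod_cast hσj
      field_simp
  refine ⟨W, V, σ, hW1, hW2, hV1, hV2, hσ, ?_⟩
  calc X = X * (V * Vᴴ) := by rw [hV2, Matrix.mul_one]
  _ = (X * V) * Vᴴ := by rw [Matrix.mul_assoc]
  _ = W * Matrix.diagonal (fun i => (σ i : ℂ)) * Vᴴ := by rw [main]


lemma tnorm_nonneg (X : Matrix (Fin d) (Fin d) ℂ) : 0 ≤ tnorm X := by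
  obtain ⟨W, V, σ, hW1, hW2, hV1, hV2, hσ, hX⟩ := exists_svd X
  rw [hX, tnorm_svd hW1 hV1 hσ]
  exact Finset.sum_nonneg fun i _ => hσ i

lemma tnorm_conjTranspose (X : Matrix (Fin d) (Fin d) ℂ) : tnorm Xᴴ = tnorm X := by
  obtain ⟨W, V, σ, hW1, hW2, hV1, hV2, hσ, hX⟩ := exists_svd X
  have hXH : Xᴴ = V * Matrix.diagonal (fun i => (σ i : ℂ)) * Wᴴ := by
    rw [hX, Matrix.conjTranspose_mul, Matrix.conjTranspose_mul, diag_herm,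
      Matrix.conjTranspose_conjTranspose, Matrix.mul_assoc]
  rw [hXH, hX, tnorm_svd hW1 hV1 hσ, tnorm_svd hV1 hW1 hσ]

lemma tnorm_swap {P Q : Matrix (Fin d) (Fin d) ℂ} (hP : Pᴴ = P) (hQ : Qᴴ = Q) :
    tnorm (P * Q) = tnorm (Q * P) := by
  have : (Q * P)ᴴ = P * Q := by rw [Matrix.conjTranspose_mul, hP, hQ]
  rw [← this, tnorm_conjTranspose]

lemma exists_unitary_trace (X : Matrix (Fin d) (Fin d) ℂ) :
    ∃ U : Matrix (Fin d) (Fin d) ℂ, Uᴴ * U = 1 ∧ U * Uᴴ = 1 ∧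
      (X * U).trace = ((tnorm X : ℂ)) := by
  obtain ⟨W, V, σ, hW1, hW2, hV1, hV2, hσ, hX⟩ := exists_svd X
  refine ⟨V * Wᴴ, ?_, ?_, ?_⟩
  · rw [Matrix.conjTranspose_mul, Matrix.conjTranspose_conjTranspose]
    calc W * Vᴴ * (V * Wᴴ) = W * (Vᴴ * V) * Wᴴ := by simp only [Matrix.mul_assoc]
    _ = 1 := by rw [hV1, Matrix.mul_one, hW2]
  · rw [Matrix.conjTranspose_mul, Matrix.conjTranspose_conjTranspose]
    calc V * Wᴴ * (W * Vᴴ) = V * (Wᴴ * W) * Vᴴ := by simp only [Matrix.mul_assoc]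
    _ = 1 := by rw [hW1, Matrix.mul_one, hV2]
  · have hXU : X * (V * Wᴴ) = W * Matrix.diagonal (fun i => (σ i : ℂ)) * Wᴴ := by
      rw [hX]
      calc W * Matrix.diagonal (fun i => (σ i : ℂ)) * Vᴴ * (V * Wᴴ)
          = W * Matrix.diagonal (fun i => (σ i : ℂ)) * (Vᴴ * V) * Wᴴ := by
            simp only [Matrix.mul_assoc]
      _ = _ := by rw [hV1, Matrix.mul_one]
    rw [hXU, hX, tnorm_svd hW1 hV1 hσ, Matrix.trace_mul_cycle, hW1, Matrix.one_mul,
      Matrix.trace_diagonal, ← Complex.ofReal_sum]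

lemma norm_diag_le_one {M : Matrix (Fin d) (Fin d) ℂ} (hM : M * Mᴴ = 1) (i : Fin d) :
    ‖M i i‖ ≤ 1 := by
  have h := congrArg (fun N => (N i i).re) hM
  simp only [Matrix.mul_apply, Matrix.conjTranspose_apply] at h
  have h1 : (∑ j, Complex.normSq (M i j)) = 1 := by
    have : ∀ j, M i j * star (M i j) = (Complex.normSq (M i j) : ℂ) := fun j =>
      Complex.mul_conj (M i j)
    simp only [this] at h
    rw [← Complex.ofReal_sum] at h
    simpa [Matrix.one_apply] using h
  have h2 : Complex.normSq (M i i) ≤ 1 := by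
    rw [← h1]
    exact Finset.single_le_sum (fun j _ => Complex.normSq_nonneg _) (Finset.mem_univ i)
  have h3 : ‖M i i‖ ^ 2 = Complex.normSq (M i i) := Complex.sq_norm _
  nlinarith [norm_nonneg (M i i)]

lemma trace_mul_unitary_le (X : Matrix (Fin d) (Fin d) ℂ) {U : Matrix (Fin d) (Fin d) ℂ}
    (hU1 : Uᴴ * U = 1) (hU2 : U * Uᴴ = 1) : ‖(X * U).trace‖ ≤ tnorm X := by
  obtain ⟨W, V, σ, hW1, hW2, hV1, hV2, hσ, hX⟩ := exists_svd X
  set D : Matrix (Fin d) (Fin d) ℂ := Matrix.diagonal (fun i => (σ i : ℂ)) with hD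
  set M := Vᴴ * U * W with hM
  have hMM : M * Mᴴ = 1 := by
    rw [hM, Matrix.conjTranspose_mul, Matrix.conjTranspose_mul,
      Matrix.conjTranspose_conjTranspose]
    calc Vᴴ * U * W * (Wᴴ * (Uᴴ * V)) = Vᴴ * (U * ((W * Wᴴ) * (Uᴴ * V))) := by
          simp only [Matrix.mul_assoc]
    _ = Vᴴ * (U * Uᴴ * V) := by rw [hW2, Matrix.one_mul]; simp only [Matrix.mul_assoc]
    _ = 1 := by rw [hU2, Matrix.one_mul, hV1]
  have htr : (X * U).trace = (D * M).trace := by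
    rw [hX, hM]
    rw [Matrix.trace_mul_comm]
    rw [show U * (W * D * Vᴴ) = (U * W) * D * Vᴴ by simp only [Matrix.mul_assoc]]
    rw [Matrix.trace_mul_cycle]
    rw [show Vᴴ * (U * W) * D = (Vᴴ * U * W) * D by simp only [Matrix.mul_assoc]]
    rw [Matrix.trace_mul_comm]
  have hDM : (D * M).trace = ∑ i, (σ i : ℂ) * M i i := by
    rw [Matrix.trace]
    apply Finset.sum_congr rfl
    intro i _
    rw [Matrix.diag_apply, hD, Matrix.diagonal_mul]
  rw [htr, hDM, hX, tnorm_svd hW1 hV1 hσ]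
  calc ‖∑ i, (σ i : ℂ) * M i i‖ ≤ ∑ i, ‖(σ i : ℂ) * M i i‖ := norm_sum_le _ _
  _ ≤ ∑ i, σ i := by
      apply Finset.sum_le_sum
      intro i _
      rw [norm_mul, Complex.norm_real, Real.norm_of_nonneg (hσ i)]
      calc σ i * ‖M i i‖ ≤ σ i * 1 :=
        mul_le_mul_of_nonneg_left (norm_diag_le_one hMM i) (hσ i)
      _ = σ i := mul_one _

lemma trace_ct_nonneg (M : Matrix (Fin d) (Fin d) ℂ) : 0 ≤ (Mᴴ * M).trace := by
  rw [Matrix.trace]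
  apply Finset.sum_nonneg
  intro i _
  rw [Matrix.diag_apply, Matrix.mul_apply]
  apply Finset.sum_nonneg
  intro j _
  rw [Matrix.conjTranspose_apply]
  rw [show star (M j i) * M j i = (Complex.normSq (M j i) : ℂ) from
    (Complex.normSq_eq_conj_mul_self).symm]
  exact Complex.zero_le_real.mpr (Complex.normSq_nonneg _)

lemma fidelity_eq {ρ σ : Matrix (Fin d) (Fin d) ℂ} (hρ : ρ.PosSemidef) (hσ : σ.PosSemidef) :
    fidelity ρ σ = tnorm (hσ.sqrt * hρ.sqrt) ^ 2 := by
  rw [fidelity]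
  have h1 : msqrt ρ = hρ.sqrt := by rw [msqrt, dif_pos hρ]
  have h2 : hρ.sqrt * σ * hρ.sqrt = (hσ.sqrt * hρ.sqrt)ᴴ * (hσ.sqrt * hρ.sqrt) := by
    rw [Matrix.conjTranspose_mul, hρ.posSemidef_sqrt.isHermitian.eq,
      hσ.posSemidef_sqrt.isHermitian.eq]
    set P := hρ.sqrt
    set Q := hσ.sqrt with hQdef
    have hs : Q * Q = σ := hσ.sqrt_mul_self
    rw [← hs]
    simp only [Matrix.mul_assoc]
  rw [h1, h2]
  rfl


lemma gram3_expand (v0 v1 v2 : Matrix (Fin d) (Fin d) ℂ) (x : Fin 3 → ℂ) :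
    ((x 0 • v0 + x 1 • v1 + x 2 • v2)ᴴ * (x 0 • v0 + x 1 • v1 + x 2 • v2)).trace
      = star (x 0) * x 0 * (v0ᴴ*v0).trace + star (x 0) * x 1 * (v0ᴴ*v1).trace
      + star (x 0) * x 2 * (v0ᴴ*v2).trace + star (x 1) * x 0 * (v1ᴴ*v0).trace
      + star (x 1) * x 1 * (v1ᴴ*v1).trace + star (x 1) * x 2 * (v1ᴴ*v2).trace
      + star (x 2) * x 0 * (v2ᴴ*v0).trace + star (x 2) * x 1 * (v2ᴴ*v1).trace
      + star (x 2) * x 2 * (v2ᴴ*v2).trace := by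
  simp only [Matrix.conjTranspose_add, Matrix.conjTranspose_smul, Matrix.add_mul,
    Matrix.mul_add, Matrix.smul_mul, Matrix.mul_smul, Matrix.trace_add, Matrix.trace_smul,
    smul_smul, smul_eq_mul]
  ring

lemma quadform_fin_three (G : Matrix (Fin 3) (Fin 3) ℂ) (x : Fin 3 → ℂ) :
    dotProduct (star x) (G *ᵥ x)
      = star (x 0) * x 0 * G 0 0 + star (x 0) * x 1 * G 0 1
      + star (x 0) * x 2 * G 0 2 + star (x 1) * x 0 * G 1 0
      + star (x 1) * x 1 * G 1 1 + star (x 1) * x 2 * G 1 2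
      + star (x 2) * x 0 * G 2 0 + star (x 2) * x 1 * G 2 1
      + star (x 2) * x 2 * G 2 2 := by
  simp only [dotProduct, Matrix.mulVec, Fin.sum_univ_three, Pi.star_apply]
  ring


lemma vertex {ρ σ τ : Matrix (Fin d) (Fin d) ℂ} (hρ : ρ.PosSemidef) (hρt : ρ.trace = 1)
    (hσ : σ.PosSemidef) (hσt : σ.trace = 1) (hτ : τ.PosSemidef) (hτt : τ.trace = 1) :
    tnorm (hσ.sqrt * hρ.sqrt) * tnorm (hτ.sqrt * hρ.sqrt)
      - Real.sqrt ((1 - tnorm (hσ.sqrt * hρ.sqrt) ^ 2) * (1 - tnorm (hτ.sqrt * hρ.sqrt) ^ 2))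
      ≤ tnorm (hτ.sqrt * hσ.sqrt) := by
  set A := hρ.sqrt with hAdef
  set B := hσ.sqrt with hBdef
  set C := hτ.sqrt with hCdef
  have hA : Aᴴ = A := hρ.posSemidef_sqrt.isHermitian.eq
  have hB : Bᴴ = B := hσ.posSemidef_sqrt.isHermitian.eq
  have hC : Cᴴ = C := hτ.posSemidef_sqrt.isHermitian.eq
  have hAA : A * A = ρ := hρ.sqrt_mul_self
  have hBB : B * B = σ := hσ.sqrt_mul_self
  have hCC : C * C = τ := hτ.sqrt_mul_self
  set a := tnorm (B * A) with hadef
  set b := tnorm (C * A) with hbdef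
  set c := tnorm (C * B) with hcdef
  have ha0 : 0 ≤ a := tnorm_nonneg _
  have hb0 : 0 ≤ b := tnorm_nonneg _
  -- unitaries achieving a and b
  obtain ⟨U₂, hU₂1, hU₂2, hU₂t⟩ := exists_unitary_trace (A * B)
  obtain ⟨U₃, hU₃1, hU₃2, hU₃t⟩ := exists_unitary_trace (A * C)
  rw [tnorm_swap hA hB] at hU₂t
  rw [tnorm_swap hA hC] at hU₃t
  set z := ((B * U₂)ᴴ * (C * U₃)).trace with hzdef
  -- |z| ≤ c
  have hz : ‖z‖ ≤ c := by
    have h1 : (B * U₂)ᴴ * (C * U₃) = U₂ᴴ * ((B * C) * U₃) := by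
      rw [Matrix.conjTranspose_mul, hB]
      simp only [Matrix.mul_assoc]
    have h2 : z = ((B * C) * (U₃ * U₂ᴴ)).trace := by
      rw [hzdef, h1, Matrix.trace_mul_comm, Matrix.mul_assoc]
    have hu1 : (U₃ * U₂ᴴ)ᴴ * (U₃ * U₂ᴴ) = 1 := by
      rw [Matrix.conjTranspose_mul, Matrix.conjTranspose_conjTranspose]
      calc U₂ * U₃ᴴ * (U₃ * U₂ᴴ) = U₂ * (U₃ᴴ * U₃) * U₂ᴴ := by simp only [Matrix.mul_assoc]
      _ = 1 := by rw [hU₃1, Matrix.mul_one, hU₂2]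
    have hu2 : (U₃ * U₂ᴴ) * (U₃ * U₂ᴴ)ᴴ = 1 := by
      rw [Matrix.conjTranspose_mul, Matrix.conjTranspose_conjTranspose]
      calc U₃ * U₂ᴴ * (U₂ * U₃ᴴ) = U₃ * (U₂ᴴ * U₂) * U₃ᴴ := by simp only [Matrix.mul_assoc]
      _ = 1 := by rw [hU₂1, Matrix.mul_one, hU₃2]
    have := trace_mul_unitary_le (B * C) hu1 hu2
    rw [← h2] at this
    rwa [tnorm_swap hB hC] at this
  -- Gram matrix
  set G : Matrix (Fin 3) (Fin 3) ℂ :=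
    !![1, (a : ℂ), (b : ℂ); (a : ℂ), 1, z; (b : ℂ), star z, 1] with hGdef
  -- entry trace identities
  have t00 : (Aᴴ * A).trace = 1 := by rw [hA, hAA, hρt]
  have t01 : (Aᴴ * (B * U₂)).trace = (a : ℂ) := by
    rw [hA, ← Matrix.mul_assoc]; exact hU₂t
  have t02 : (Aᴴ * (C * U₃)).trace = (b : ℂ) := by
    rw [hA, ← Matrix.mul_assoc]; exact hU₃t
  have t10 : ((B * U₂)ᴴ * A).trace = (a : ℂ) := by
    have : (B * U₂)ᴴ * A = (Aᴴ * (B * U₂))ᴴ := by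
      simp only [Matrix.conjTranspose_mul, Matrix.conjTranspose_conjTranspose,
        Matrix.mul_assoc]
    rw [this, Matrix.trace_conjTranspose, t01, Complex.star_def, Complex.conj_ofReal]
  have t20 : ((C * U₃)ᴴ * A).trace = (b : ℂ) := by
    have : (C * U₃)ᴴ * A = (Aᴴ * (C * U₃))ᴴ := by
      simp only [Matrix.conjTranspose_mul, Matrix.conjTranspose_conjTranspose,
        Matrix.mul_assoc]
    rw [this, Matrix.trace_conjTranspose, t02, Complex.star_def, Complex.conj_ofReal]
  have t11 : ((B * U₂)ᴴ * (B * U₂)).trace = 1 := by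
    rw [Matrix.conjTranspose_mul, hB]
    rw [show U₂ᴴ * B * (B * U₂) = U₂ᴴ * (B * B) * U₂ by simp only [Matrix.mul_assoc]]
    rw [Matrix.trace_mul_cycle, ← Matrix.mul_assoc, hU₂2, Matrix.one_mul, hBB, hσt]
  have t22 : ((C * U₃)ᴴ * (C * U₃)).trace = 1 := by
    rw [Matrix.conjTranspose_mul, hC]
    rw [show U₃ᴴ * C * (C * U₃) = U₃ᴴ * (C * C) * U₃ by simp only [Matrix.mul_assoc]]
    rw [Matrix.trace_mul_cycle, ← Matrix.mul_assoc, hU₃2, Matrix.one_mul, hCC, hτt]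
  have t21 : ((C * U₃)ᴴ * (B * U₂)).trace = star z := by
    have : (C * U₃)ᴴ * (B * U₂) = ((B * U₂)ᴴ * (C * U₃))ᴴ := by
      simp only [Matrix.conjTranspose_mul, Matrix.conjTranspose_conjTranspose,
        Matrix.mul_assoc]
    rw [this, Matrix.trace_conjTranspose, hzdef]
  have t12 : ((B * U₂)ᴴ * (C * U₃)).trace = z := hzdef.symm
  -- PosSemidef G
  have hGpsd : G.PosSemidef := by
    rw [Matrix.posSemidef_iff_dotProduct_mulVec]
    constructor
    · ext i j
      fin_cases i <;> fin_cases j <;>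
        simp [hGdef, Matrix.conjTranspose_apply, Complex.conj_ofReal]
    · intro x
      have hexp := gram3_expand A (B * U₂) (C * U₃) x
      rw [t00, t01, t02, t10, t11, t12, t20, t21, t22] at hexp
      have hq := quadform_fin_three G x
      have hent : dotProduct (star x) (G *ᵥ x)
          = ((x 0 • A + x 1 • (B * U₂) + x 2 • (C * U₃))ᴴ
            * (x 0 • A + x 1 • (B * U₂) + x 2 • (C * U₃))).trace := by
        rw [hq, hexp, hGdef]
        simp
      rw [hent]
      exact trace_ct_nonneg _
  -- determinant nonneg
  have hdet0 : 0 ≤ (G.det).re := by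
    have h1 : G.det = ∏ i, ((hGpsd.1.eigenvalues i : ℝ) : ℂ) :=
      hGpsd.1.det_eq_prod_eigenvalues
    rw [h1, ← Complex.ofReal_prod, Complex.ofReal_re]
    exact Finset.prod_nonneg (fun i _ => hGpsd.eigenvalues_nonneg i)
  have hdet_re : (G.det).re = 1 - Complex.normSq z - a^2 - b^2 + 2*a*b*z.re := by
    rw [Matrix.det_fin_three, hGdef]
    simp [Complex.normSq_apply, Complex.mul_re, Complex.mul_im, Complex.add_re,
      Complex.sub_re, Complex.add_im, Complex.sub_im, Complex.one_re, Complex.one_im,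
      Complex.ofReal_re, Complex.ofReal_im, Complex.conj_re, Complex.conj_im]
    ring
  rw [hdet_re] at hdet0
  have hre : z.re ≤ ‖z‖ := by
    exact Complex.re_le_norm z
  have hnsq : Complex.normSq z = ‖z‖^2 := by
    rw [Complex.sq_norm]
  have key2 : (‖z‖ - a*b)^2 ≤ (1-a^2)*(1-b^2) := by
    nlinarith [mul_le_mul_of_nonneg_left hre (mul_nonneg ha0 hb0), norm_nonneg z]
  have h3 : a*b - ‖z‖ ≤ Real.sqrt ((1-a^2)*(1-b^2)) := by
    have h4 := Real.sqrt_le_sqrt key2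
    rw [Real.sqrt_sq_eq_abs] at h4
    have h5 : a*b - ‖z‖ ≤ |‖z‖ - a*b| := by
      rw [abs_sub_comm]; exact le_abs_self _
    linarith
  linarith


lemma trace_sub_expand (v w : Matrix (Fin d) (Fin d) ℂ) :
    ((v - w)ᴴ * (v - w)).trace
      = (vᴴ*v).trace + (wᴴ*w).trace - (vᴴ*w).trace - (wᴴ*v).trace := by
  rw [Matrix.conjTranspose_sub, Matrix.sub_mul, Matrix.mul_sub, Matrix.mul_sub,
    Matrix.trace_sub, Matrix.trace_sub, Matrix.trace_sub]
  ring

lemma tnorm_le_one {ρ σ : Matrix (Fin d) (Fin d) ℂ} (hρ : ρ.PosSemidef) (hρt : ρ.trace = 1)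
    (hσ : σ.PosSemidef) (hσt : σ.trace = 1) :
    tnorm (hσ.sqrt * hρ.sqrt) ≤ 1 := by
  set A := hρ.sqrt with hAdef
  set B := hσ.sqrt with hBdef
  have hA : Aᴴ = A := hρ.posSemidef_sqrt.isHermitian.eq
  have hB : Bᴴ = B := hσ.posSemidef_sqrt.isHermitian.eq
  have hAA : A * A = ρ := hρ.sqrt_mul_self
  have hBB : B * B = σ := hσ.sqrt_mul_self
  obtain ⟨U, hU1, hU2, hUt⟩ := exists_unitary_trace (A * B)
  rw [tnorm_swap hA hB] at hUt
  have h0 := trace_ct_nonneg (A - B * U)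
  rw [trace_sub_expand] at h0
  have t00 : (Aᴴ * A).trace = 1 := by rw [hA, hAA, hρt]
  have t11 : ((B * U)ᴴ * (B * U)).trace = 1 := by
    rw [Matrix.conjTranspose_mul, hB]
    rw [show Uᴴ * B * (B * U) = Uᴴ * (B * B) * U by simp only [Matrix.mul_assoc]]
    rw [Matrix.trace_mul_cycle, ← Matrix.mul_assoc, hU2, Matrix.one_mul, hBB, hσt]
  have t01 : (Aᴴ * (B * U)).trace = ((tnorm (B * A) : ℂ)) := by
    rw [hA, ← Matrix.mul_assoc]; exact hUt
  have t10 : ((B * U)ᴴ * A).trace = ((tnorm (B * A) : ℂ)) := by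
    have h : (B * U)ᴴ * A = (Aᴴ * (B * U))ᴴ := by
      simp only [Matrix.conjTranspose_mul, Matrix.conjTranspose_conjTranspose,
        Matrix.mul_assoc]
    rw [h, Matrix.trace_conjTranspose, t01, Complex.star_def, Complex.conj_ofReal]
  rw [t00, t11, t01, t10] at h0
  have hre := (Complex.le_def.mp h0).1
  simp only [Complex.zero_re, Complex.sub_re, Complex.add_re, Complex.one_re,
    Complex.ofReal_re] at hre
  linarith

set_option maxHeartbeats 1000000 in
lemma angle_ineq {a b c : ℝ} (ha0 : 0 ≤ a) (ha1 : a ≤ 1) (hb0 : 0 ≤ b) (hb1 : b ≤ 1)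
    (hc0 : 0 ≤ c) (hc1 : c ≤ 1)
    (h1 : a * b - Real.sqrt ((1 - a^2) * (1 - b^2)) ≤ c)
    (h2 : a * c - Real.sqrt ((1 - a^2) * (1 - c^2)) ≤ b)
    (h3 : b * c - Real.sqrt ((1 - b^2) * (1 - c^2)) ≤ a) :
    a^2 + b^2 + c^2 ≤ 1 + 2 * (a * b * c) := by
  set A := Real.arccos a with hA
  set B := Real.arccos b with hB
  set C := Real.arccos c with hC
  have hcosA : Real.cos A = a := Real.cos_arccos (by linarith) ha1
  have hcosB : Real.cos B = b := Real.cos_arccos (by linarith) hb1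
  have hcosC : Real.cos C = c := Real.cos_arccos (by linarith) hc1
  have hsinA : Real.sin A = Real.sqrt (1 - a^2) := Real.sin_arccos a
  have hsinB : Real.sin B = Real.sqrt (1 - b^2) := Real.sin_arccos b
  have hsinC : Real.sin C = Real.sqrt (1 - c^2) := Real.sin_arccos c
  have hA0 : 0 ≤ A := Real.arccos_nonneg a
  have hB0 : 0 ≤ B := Real.arccos_nonneg b
  have hC0 : 0 ≤ C := Real.arccos_nonneg c
  have hA2 : A ≤ Real.pi / 2 := Real.arccos_le_pi_div_two.mpr ha0
  have hB2 : B ≤ Real.pi / 2 := Real.arccos_le_pi_div_two.mpr hb0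
  have hC2 : C ≤ Real.pi / 2 := Real.arccos_le_pi_div_two.mpr hc0
  have hsq : ∀ x : ℝ, x ≤ 1 → 0 ≤ 1 - x^2 → True := fun _ _ _ => trivial
  have hmul : ∀ x y : ℝ, 0 ≤ 1 - x^2 → Real.sqrt ((1 - x^2) * (1 - y^2))
      = Real.sqrt (1 - x^2) * Real.sqrt (1 - y^2) := fun x y hx => Real.sqrt_mul hx _
  have ha2 : (0:ℝ) ≤ 1 - a^2 := by nlinarith
  have hb2 : (0:ℝ) ≤ 1 - b^2 := by nlinarith
  have hc2 : (0:ℝ) ≤ 1 - c^2 := by nlinarith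
  -- triangle inequalities
  have tri : ∀ {X Y Z : ℝ} {x y z : ℝ}, 0 ≤ X → X ≤ Real.pi/2 → 0 ≤ Y → Y ≤ Real.pi/2 →
      0 ≤ Z → Z ≤ Real.pi/2 → Real.cos X = x → Real.cos Y = y → Real.cos Z = z →
      Real.sin X = Real.sqrt (1 - x^2) → Real.sin Y = Real.sqrt (1 - y^2) →
      (x * y - Real.sqrt ((1 - x^2) * (1 - y^2)) ≤ z) → 0 ≤ 1 - x^2 →
      Z ≤ X + Y := by
    intro X Y Z x y z hX0 hX2 hY0 hY2 hZ0 hZ2 hx hy hz hsx hsy h hx2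
    have hcos : Real.cos (X + Y) ≤ Real.cos Z := by
      rw [Real.cos_add, hx, hy, hsx, hsy, hz]
      rw [← Real.sqrt_mul hx2]
      linarith
    by_contra hlt
    push_neg at hlt
    have := Real.strictAntiOn_cos ⟨by linarith, by linarith [Real.pi_pos]⟩
      ⟨by linarith, by linarith⟩ hlt
    linarith
  have tCAB : C ≤ A + B := tri hA0 hA2 hB0 hB2 hC0 hC2 hcosA hcosB hcosC hsinA hsinB h1 ha2
  have tBAC : B ≤ A + C := tri hA0 hA2 hC0 hC2 hB0 hB2 hcosA hcosC hcosB hsinA hsinC h2 ha2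
  have tABC : A ≤ B + C := tri hB0 hB2 hC0 hC2 hA0 hA2 hcosB hcosC hcosA hsinB hsinC h3 hb2
  -- cos C ≤ cos (A - B), cos C ≥ cos (A + B)
  have hup : Real.cos (A + B) ≤ c := by
    rcases le_or_gt (A + B) Real.pi with hle | hgt
    · rw [← hcosC]
      rcases eq_or_lt_of_le tCAB with he | hlt
      · rw [he]
      · exact le_of_lt (Real.strictAntiOn_cos ⟨hC0, by linarith⟩ ⟨by linarith, hle⟩ hlt)
    · linarith [Real.pi_pos]
  have hdown : c ≤ Real.cos (A - B) := by
    have habs : |A - B| ≤ C := abs_sub_le_iff.mpr ⟨by linarith, by linarith⟩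
    rw [← Real.cos_abs (A - B), ← hcosC]
    rcases eq_or_lt_of_le habs with he | hlt
    · rw [he]
    · exact le_of_lt (Real.strictAntiOn_cos ⟨abs_nonneg _, by linarith [Real.pi_pos]⟩
        ⟨by linarith [abs_nonneg (A - B)], by linarith [Real.pi_pos]⟩ hlt)
  rw [Real.cos_add, hcosA, hcosB, hsinA, hsinB] at hup
  rw [Real.cos_sub, hcosA, hcosB, hsinA, hsinB] at hdown
  have hs2 : Real.sqrt (1 - a^2) * Real.sqrt (1 - b^2)
      = Real.sqrt ((1-a^2)*(1-b^2)) := (Real.sqrt_mul ha2 _).symm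
  have hsqval : (Real.sqrt ((1-a^2)*(1-b^2)))^2 = (1-a^2)*(1-b^2) :=
    Real.sq_sqrt (mul_nonneg ha2 hb2)
  rw [hs2] at hup hdown
  nlinarith [hup, hdown, hsqval]


end FidAux

open FidAux

/-- For any three density matrices,
`F₁₂ + F₁₃ + F₂₃ ≤ 1 + 2 √(F₁₂ F₁₃ F₂₃)`. -/
theorem fidelity_triple_inequality {d : ℕ}
    {ρ₁ ρ₂ ρ₃ : Matrix (Fin d) (Fin d) ℂ}
    (h₁ : ρ₁.PosSemidef) (h₁t : ρ₁.trace = 1)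
    (h₂ : ρ₂.PosSemidef) (h₂t : ρ₂.trace = 1)
    (h₃ : ρ₃.PosSemidef) (h₃t : ρ₃.trace = 1) :
    fidelity ρ₁ ρ₂ + fidelity ρ₁ ρ₃ + fidelity ρ₂ ρ₃ ≤
      1 + 2 * Real.sqrt (fidelity ρ₁ ρ₂ * fidelity ρ₁ ρ₃ * fidelity ρ₂ ρ₃) := by
  set a := tnorm (h₂.sqrt * h₁.sqrt) with hadef
  set b := tnorm (h₃.sqrt * h₁.sqrt) with hbdef
  set c := tnorm (h₃.sqrt * h₂.sqrt) with hcdef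
  have hh₁ : (h₁.sqrt)ᴴ = h₁.sqrt := h₁.posSemidef_sqrt.isHermitian.eq
  have hh₂ : (h₂.sqrt)ᴴ = h₂.sqrt := h₂.posSemidef_sqrt.isHermitian.eq
  have hh₃ : (h₃.sqrt)ᴴ = h₃.sqrt := h₃.posSemidef_sqrt.isHermitian.eq
  have f12 : fidelity ρ₁ ρ₂ = a ^ 2 := fidelity_eq h₁ h₂
  have f13 : fidelity ρ₁ ρ₃ = b ^ 2 := fidelity_eq h₁ h₃
  have f23 : fidelity ρ₂ ρ₃ = c ^ 2 := fidelity_eq h₂ h₃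
  have ha0 : 0 ≤ a := tnorm_nonneg _
  have hb0 : 0 ≤ b := tnorm_nonneg _
  have hc0 : 0 ≤ c := tnorm_nonneg _
  have ha1 : a ≤ 1 := tnorm_le_one h₁ h₁t h₂ h₂t
  have hb1 : b ≤ 1 := tnorm_le_one h₁ h₁t h₃ h₃t
  have hc1 : c ≤ 1 := tnorm_le_one h₂ h₂t h₃ h₃t
  have v1 := vertex h₁ h₁t h₂ h₂t h₃ h₃t
  have v2 := vertex h₂ h₂t h₁ h₁t h₃ h₃t
  have v3 := vertex h₃ h₃t h₁ h₁t h₂ h₂t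
  rw [tnorm_swap hh₁ hh₂] at v2
  rw [tnorm_swap hh₁ hh₃, tnorm_swap hh₂ hh₃] at v3
  have key := angle_ineq ha0 ha1 hb0 hb1 hc0 hc1 v1 v2 v3
  rw [f12, f13, f23, show a ^ 2 * b ^ 2 * c ^ 2 = (a * b * c) ^ 2 by ring,
    Real.sqrt_sq (mul_nonneg (mul_nonneg ha0 hb0) hc0)]
  linarith
end

section
/- Let ρ₁, ρ₂, ρ₃ be density matrices of the same dimension d, and write Fᵢⱼ = F(ρᵢ; ρⱼ). Then |√F₁₂ − √F₁₃| ≤ √(1 − F₂₃), and consequently |F₁₂ − F₁₃| ≤ 2 √(1 − F₂₃). -/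
open scoped Classical

open Matrix ComplexOrder

section Aux

set_option linter.unusedSectionVars false

variable {n : Type*} [Fintype n] [DecidableEq n]

lemma psd_spec_nonneg {A : Matrix n n ℂ} (h : A.PosSemidef) : ∀ x ∈ spectrum ℝ A, 0 ≤ x := by
  rw [h.1.spectrum_real_eq_range_eigenvalues]
  rintro _ ⟨i, rfl⟩
  exact h.eigenvalues_nonneg i

lemma msqrt_eq {A : Matrix n n ℂ} (h : A.PosSemidef) : msqrt A = cfc Real.sqrt A := by
  rw [msqrt, dif_pos h, h.1.cfc_eq, IsHermitian.cfc, Unitary.conjStarAlgAut_apply]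
  rfl

lemma msqrt_posSemidef {A : Matrix n n ℂ} (h : A.PosSemidef) : (msqrt A).PosSemidef := by
  rw [msqrt, dif_pos h]
  have hd : (diagonal ((↑) ∘ (√·) ∘ h.1.eigenvalues) : Matrix n n ℂ).PosSemidef := by
    rw [posSemidef_diagonal_iff]
    intro i
    simp [Real.sqrt_nonneg]
  have := hd.mul_mul_conjTranspose_same (h.1.eigenvectorUnitary : Matrix n n ℂ)
  simpa [Unitary.coe_star, star_eq_conjTranspose] using this

lemma msqrt_mul_self {A : Matrix n n ℂ} (h : A.PosSemidef) : msqrt A * msqrt A = A := by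
  rw [msqrt_eq h, ← cfc_mul (a := A) Real.sqrt Real.sqrt]
  conv_rhs => rw [← cfc_id' ℝ A h.1]
  apply cfc_congr
  intro x hx
  exact Real.mul_self_sqrt (psd_spec_nonneg h x hx)

lemma msqrt_unique {A B : Matrix n n ℂ} (hB : B.PosSemidef) (h : B ^ 2 = A) :
    B = msqrt A := by
  have hBs : IsSelfAdjoint B := hB.1
  have hA : A.PosSemidef := by rw [← h, pow_two]; simpa [hB.1.eq] using
    Matrix.posSemidef_conjTranspose_mul_self B
  rw [msqrt_eq hA, ← h, ← cfc_pow_id (R := ℝ) B 2 hBs,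
    ← cfc_comp (a := B) Real.sqrt (fun x => x ^ 2) hBs]
  conv_lhs => rw [← cfc_id' ℝ B hBs]
  apply cfc_congr
  intro x hx
  exact (Real.sqrt_sq (psd_spec_nonneg hB x hx)).symm

lemma msqrt_herm {A : Matrix n n ℂ} (h : A.PosSemidef) : (msqrt A)ᴴ = msqrt A :=
  (msqrt_posSemidef h).1

-- diag entries of PSD are nonneg (in ComplexOrder)
lemma psd_diag_nonneg {A : Matrix n n ℂ} (h : A.PosSemidef) (i : n) : 0 ≤ A i i := by
  exact h.diag_nonneg

lemma psd_trace_nonneg {A : Matrix n n ℂ} (h : A.PosSemidef) : 0 ≤ A.trace := by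
  unfold Matrix.trace
  exact Finset.sum_nonneg fun i _ => psd_diag_nonneg h i

lemma psd_trace_coe {A : Matrix n n ℂ} (h : A.PosSemidef) :
    (A.trace.re : ℂ) = A.trace := by
  have h0 := psd_trace_nonneg h
  rw [Complex.le_def] at h0
  simp [Complex.ext_iff, ← h0.2]

lemma psd_trace_re_nonneg {A : Matrix n n ℂ} (h : A.PosSemidef) : 0 ≤ A.trace.re := by
  have h0 := psd_trace_nonneg h
  rw [Complex.le_def] at h0
  simpa using h0.1

lemma trace_conj_mul (A B : Matrix n n ℂ) :
    (Aᴴ * B).trace = ∑ p : n × n, (starRingEnd ℂ) (A p.1 p.2) * B p.1 p.2 := by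
  rw [Fintype.sum_prod_type, Matrix.trace]
  simp only [Matrix.diag, Matrix.mul_apply, Matrix.conjTranspose_apply, RCLike.star_def]
  rw [Finset.sum_comm]

lemma trace_conj_mul_self_re (A : Matrix n n ℂ) :
    (Aᴴ * A).trace.re = ∑ p : n × n, ‖A p.1 p.2‖ ^ 2 := by
  rw [trace_conj_mul, Complex.re_sum]
  refine Finset.sum_congr rfl fun p _ => ?_
  rw [mul_comm, Complex.mul_conj]
  simp [Complex.sq_norm]

lemma trace_cs (A B : Matrix n n ℂ) :
    ‖(Aᴴ * B).trace‖ ≤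
      Real.sqrt ((Aᴴ * A).trace.re) * Real.sqrt ((Bᴴ * B).trace.re) := by
  classical
  set a : EuclideanSpace ℂ (n × n) := (WithLp.equiv 2 ((n × n) → ℂ)).symm (fun p => A p.1 p.2)
  set b : EuclideanSpace ℂ (n × n) := (WithLp.equiv 2 ((n × n) → ℂ)).symm (fun p => B p.1 p.2)
  have hab : (Aᴴ * B).trace = inner (𝕜 := ℂ) a b := by
    rw [trace_conj_mul, PiLp.inner_apply]
    simp [a, b, RCLike.inner_apply]
    exact Finset.sum_congr rfl fun _ _ => mul_comm _ _
  have hna : Real.sqrt ((Aᴴ * A).trace.re) = ‖a‖ := by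
    rw [trace_conj_mul_self_re, EuclideanSpace.norm_eq]
    simp [a]
  have hnb : Real.sqrt ((Bᴴ * B).trace.re) = ‖b‖ := by
    rw [trace_conj_mul_self_re, EuclideanSpace.norm_eq]
    simp [b]
  rw [hab, hna, hnb]
  exact norm_inner_le_norm _ _

lemma dot_star_self_re (v : n → ℂ) :
    (star v ⬝ᵥ v).re = ∑ i, ‖v i‖ ^ 2 := by
  rw [dotProduct, Complex.re_sum]
  refine Finset.sum_congr rfl fun i _ => ?_
  rw [Pi.star_apply, RCLike.star_def, mul_comm, Complex.mul_conj]
  simp [Complex.sq_norm]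

lemma quad_eq (A : Matrix n n ℂ) (v : n → ℂ) :
    star v ⬝ᵥ (Aᴴ * A) *ᵥ v = star (A *ᵥ v) ⬝ᵥ (A *ᵥ v) := by
  rw [← Matrix.mulVec_mulVec, dotProduct_mulVec, Matrix.vecMul_conjTranspose, star_star]

lemma euclidean_norm_toLin (A : Matrix n n ℂ) (y : EuclideanSpace ℂ n) :
    ‖Matrix.toEuclideanLin A y‖ ^ 2 =
      (star (A *ᵥ (WithLp.equiv 2 (n → ℂ)) y) ⬝ᵥ A *ᵥ (WithLp.equiv 2 (n → ℂ)) y).re := by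
  rw [EuclideanSpace.norm_eq, Real.sq_sqrt (by positivity), dot_star_self_re]
  rfl

lemma euclidean_norm_mulVec_eq {M P : Matrix n n ℂ} (h : Mᴴ * M = Pᴴ * P)
    (x : EuclideanSpace ℂ n) :
    ‖Matrix.toEuclideanLin M x‖ = ‖Matrix.toEuclideanLin P x‖ := by
  have h1 : ‖Matrix.toEuclideanLin M x‖ ^ 2 = ‖Matrix.toEuclideanLin P x‖ ^ 2 := by
    rw [euclidean_norm_toLin, euclidean_norm_toLin, ← quad_eq, ← quad_eq, h]
  nlinarith [norm_nonneg (Matrix.toEuclideanLin M x), norm_nonneg (Matrix.toEuclideanLin P x)]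

set_option maxHeartbeats 1000000 in
lemma polar_aux {M P : Matrix n n ℂ} (h : Mᴴ * M = Pᴴ * P) :
    ∃ U : Matrix n n ℂ, Uᴴ * U = 1 ∧ U * Uᴴ = 1 ∧ M = U * P := by
  classical
  set f : EuclideanSpace ℂ n →ₗ[ℂ] EuclideanSpace ℂ n := Matrix.toEuclideanLin P with hf
  set g : EuclideanSpace ℂ n →ₗ[ℂ] EuclideanSpace ℂ n := Matrix.toEuclideanLin M with hg
  have hfg : ∀ x, ‖g x‖ = ‖f x‖ := fun x => euclidean_norm_mulVec_eq h x
  set K : Submodule ℂ (EuclideanSpace ℂ n) := (LinearMap.ker f)ᗮ with hK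
  set fK : K →ₗ[ℂ] EuclideanSpace ℂ n := f ∘ₗ K.subtype with hfK
  have hinj : Function.Injective fK := by
    rw [← LinearMap.ker_eq_bot]
    rw [Submodule.eq_bot_iff]
    rintro ⟨x, hxK⟩ hx
    have hx0 : x ∈ LinearMap.ker f := by
      simpa [fK, LinearMap.mem_ker] using hx
    have : x ∈ LinearMap.ker f ⊓ (LinearMap.ker f)ᗮ := ⟨hx0, hxK⟩
    rw [Submodule.inf_orthogonal_eq_bot] at this
    simpa using this
  set e : K ≃ₗ[ℂ] LinearMap.range fK := LinearEquiv.ofInjective fK hinj with he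
  have he_apply : ∀ x : K, ((e x : EuclideanSpace ℂ n)) = f x := fun x => rfl
  set L0 : (LinearMap.range fK : Submodule ℂ (EuclideanSpace ℂ n)) →ₗ[ℂ] EuclideanSpace ℂ n :=
    g ∘ₗ K.subtype ∘ₗ (e.symm : (LinearMap.range fK) →ₗ[ℂ] K) with hL0
  have hL0norm : ∀ s, ‖L0 s‖ = ‖s‖ := by
    intro s
    have hs : (e (e.symm s) : EuclideanSpace ℂ n) = (s : EuclideanSpace ℂ n) := by
      rw [e.apply_symm_apply]
    have : L0 s = g (e.symm s) := rfl
    rw [this, hfg]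
    have : f ((e.symm s : K) : EuclideanSpace ℂ n) = (s : EuclideanSpace ℂ n) := by
      rw [← he_apply, hs]
    rw [this]
    rfl
  set L : (LinearMap.range fK : Submodule ℂ (EuclideanSpace ℂ n)) →ₗᵢ[ℂ] EuclideanSpace ℂ n :=
    ⟨L0, hL0norm⟩ with hL
  set U' : EuclideanSpace ℂ n →ₗᵢ[ℂ] EuclideanSpace ℂ n := L.extend with hU'
  have hU'f : ∀ x, U' (f x) = g x := by
    intro x
    obtain ⟨y, hy, z, hz, rfl⟩ := Submodule.exists_add_mem_mem_orthogonal (K := LinearMap.ker f) x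
    have hfy : f y = 0 := hy
    have hgy : g y = 0 := by
      have := hfg y
      rw [hfy, norm_zero, norm_eq_zero] at this
      exact this
    have hfx : f (y + z) = f z := by rw [map_add, hfy, zero_add]
    have hgx : g (y + z) = g z := by rw [map_add, hgy, zero_add]
    rw [hfx, hgx]
    have hzmem : f z = fK ⟨z, hz⟩ := rfl
    have : f z = ((e ⟨z, hz⟩ : LinearMap.range fK) : EuclideanSpace ℂ n) := rfl
    rw [this]
    have := LinearIsometry.extend_apply L (e ⟨z, hz⟩)
    rw [← hU'] at this
    rw [this]
    have : L (e ⟨z, hz⟩) = g ((e.symm (e ⟨z, hz⟩) : K) : EuclideanSpace ℂ n) := rfl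
    rw [this, e.symm_apply_apply]
  set U : Matrix n n ℂ := Matrix.toEuclideanLin.symm U'.toLinearMap with hU
  have hUlin : Matrix.toEuclideanLin U = U'.toLinearMap := by
    rw [hU, LinearEquiv.apply_symm_apply]
  have hMUP : M = U * P := by
    apply Matrix.toEuclideanLin.injective
    refine LinearMap.ext fun x => ?_
    have h1 : Matrix.toEuclideanLin (U * P) x = Matrix.toEuclideanLin U (Matrix.toEuclideanLin P x) := by
      rw [Matrix.toEuclideanLin_apply, Matrix.toEuclideanLin_apply, Matrix.toEuclideanLin_apply]
      simp [Matrix.mulVec_mulVec]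
    rw [h1, hUlin]
    exact (hU'f x).symm
  have hadj : LinearMap.adjoint U'.toLinearMap ∘ₗ U'.toLinearMap = LinearMap.id := by
    apply LinearMap.ext
    intro x
    apply ext_inner_left ℂ
    intro v
    rw [LinearMap.comp_apply, LinearMap.adjoint_inner_right]
    simp only [LinearIsometry.coe_toLinearMap, LinearMap.id_apply]
    exact U'.inner_map_map v x
  have hUHU : Uᴴ * U = 1 := by
    apply Matrix.toEuclideanLin.injective
    have hUH : Matrix.toEuclideanLin Uᴴ = LinearMap.adjoint (Matrix.toEuclideanLin U) :=
      Matrix.toEuclideanLin_conjTranspose_eq_adjoint U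
    refine LinearMap.ext fun x => ?_
    have h1 : Matrix.toEuclideanLin (Uᴴ * U) x = Matrix.toEuclideanLin Uᴴ (Matrix.toEuclideanLin U x) := by
      rw [Matrix.toEuclideanLin_apply, Matrix.toEuclideanLin_apply, Matrix.toEuclideanLin_apply]
      simp [Matrix.mulVec_mulVec]
    rw [h1, hUH, hUlin]
    have h2 : Matrix.toEuclideanLin (1 : Matrix n n ℂ) x = x := by
      rw [Matrix.toEuclideanLin_apply]
      simp
    rw [h2]
    have := congrArg (fun φ => φ x) hadj
    exact this
  exact ⟨U, hUHU, mul_eq_one_comm.mp hUHU, hMUP⟩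

noncomputable def tn (M : Matrix n n ℂ) : ℝ := ((msqrt (Mᴴ * M)).trace).re

lemma msqrt_psd_of_conj (M : Matrix n n ℂ) : (msqrt (Mᴴ * M)).PosSemidef :=
  msqrt_posSemidef (Matrix.posSemidef_conjTranspose_mul_self M)

lemma tn_nonneg (M : Matrix n n ℂ) : 0 ≤ tn M :=
  psd_trace_re_nonneg (msqrt_psd_of_conj M)

lemma polar (M : Matrix n n ℂ) :
    ∃ U : Matrix n n ℂ, Uᴴ * U = 1 ∧ U * Uᴴ = 1 ∧ M = U * msqrt (Mᴴ * M) := by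
  apply polar_aux
  have h := msqrt_psd_of_conj M
  rw [h.1, msqrt_mul_self (Matrix.posSemidef_conjTranspose_mul_self M)]

lemma tn_exists_unitary (M : Matrix n n ℂ) :
    ∃ V : Matrix n n ℂ, Vᴴ * V = 1 ∧ V * Vᴴ = 1 ∧ (M * V).trace = ((tn M : ℝ) : ℂ) := by
  obtain ⟨U, hU1, hU2, hM⟩ := polar M
  refine ⟨Uᴴ, by rw [Matrix.conjTranspose_conjTranspose]; exact hU2,
    by rw [Matrix.conjTranspose_conjTranspose]; exact hU1, ?_⟩
  have : M * Uᴴ = U * msqrt (Mᴴ * M) * Uᴴ := by rw [← hM]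
  rw [this, Matrix.mul_assoc, Matrix.trace_mul_comm, Matrix.mul_assoc, hU1, Matrix.mul_one]
  exact (psd_trace_coe (msqrt_psd_of_conj M)).symm

lemma tn_conjTranspose (M : Matrix n n ℂ) : tn Mᴴ = tn M := by
  obtain ⟨U, hU1, hU2, hM⟩ := polar M
  set P := msqrt (Mᴴ * M) with hP
  have hPsd : P.PosSemidef := msqrt_psd_of_conj M
  have hkey : msqrt (M * Mᴴ) = U * P * Uᴴ := by
    have h1 : (U * P * Uᴴ).PosSemidef := hPsd.mul_mul_conjTranspose_same U
    have h2 : (U * P * Uᴴ) ^ 2 = M * Mᴴ := by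
      rw [pow_two, hM]
      have hPh : Pᴴ = P := hPsd.1
      rw [Matrix.conjTranspose_mul, hPh]
      calc U * P * Uᴴ * (U * P * Uᴴ) = U * P * (Uᴴ * U) * (P * Uᴴ) := by
            simp only [Matrix.mul_assoc]
          _ = U * P * (P * Uᴴ) := by rw [hU1, Matrix.mul_one]
    have h3 : (M * Mᴴ).PosSemidef := Matrix.posSemidef_self_mul_conjTranspose M
    exact (msqrt_unique h1 h2).symm
  unfold tn
  rw [Matrix.conjTranspose_conjTranspose, hkey, Matrix.trace_mul_comm, ← Matrix.mul_assoc,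
    hU1, Matrix.one_mul]

lemma tn_unitary_le (M V : Matrix n n ℂ) (h1 : Vᴴ * V = 1) (h2 : V * Vᴴ = 1) :
    ‖(M * V).trace‖ ≤ tn M := by
  obtain ⟨U, hU1, hU2, hM⟩ := polar M
  set P := msqrt (Mᴴ * M) with hP
  have hPsd : P.PosSemidef := msqrt_psd_of_conj M
  set Q := msqrt P with hQ
  have hQsd : Q.PosSemidef := msqrt_posSemidef hPsd
  have hQQ : Q * Q = P := msqrt_mul_self hPsd
  have hQh : Qᴴ = Q := hQsd.1
  have htr : (M * V).trace = (Qᴴ * (Q * (V * U))).trace := by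
    rw [hM, hQh, ← Matrix.mul_assoc Q Q, hQQ]
    rw [Matrix.mul_assoc U P V, Matrix.trace_mul_comm U (P * V), Matrix.mul_assoc]
  have hVU1 : (V * U)ᴴ * (V * U) = 1 := by
    rw [Matrix.conjTranspose_mul, Matrix.mul_assoc, ← Matrix.mul_assoc Vᴴ V U, h1,
      Matrix.one_mul, hU1]
  have hQVU : ((Q * (V * U))ᴴ * (Q * (V * U))).trace = P.trace := by
    rw [Matrix.conjTranspose_mul, hQh, Matrix.mul_assoc, ← Matrix.mul_assoc Q Q, hQQ]
    rw [Matrix.trace_mul_comm, Matrix.mul_assoc, mul_eq_one_comm.mp hVU1, Matrix.mul_one]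
  have hQQtr : (Qᴴ * Q).trace = P.trace := by rw [hQh, hQQ]
  have := trace_cs Q (Q * (V * U))
  rw [← htr] at this
  rw [hQVU, hQQtr] at this
  calc ‖(M * V).trace‖ ≤ Real.sqrt P.trace.re * Real.sqrt P.trace.re := this
    _ = P.trace.re := Real.mul_self_sqrt (psd_trace_re_nonneg hPsd)
    _ = tn M := rfl

lemma trace_conj_herm (A B : Matrix n n ℂ) :
    (starRingEnd ℂ) ((Aᴴ * B).trace) = (Bᴴ * A).trace := by
  have : (Bᴴ * A) = (Aᴴ * B)ᴴ := by rw [Matrix.conjTranspose_mul, Matrix.conjTranspose_conjTranspose]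
  rw [this, Matrix.trace_conjTranspose]
  rfl

set_option maxHeartbeats 1000000 in
lemma gram_ineq (u v w : Matrix n n ℂ)
    (hu : (uᴴ * u).trace = 1) (hv : (vᴴ * v).trace = 1) (hw : (wᴴ * w).trace = 1) :
    ‖(uᴴ * v).trace‖ ^ 2 + ‖(uᴴ * w).trace‖ ^ 2 +
        ‖(vᴴ * w).trace‖ ^ 2 ≤
      1 + 2 * (‖(uᴴ * v).trace‖ * ‖(uᴴ * w).trace‖ *
        ‖(vᴴ * w).trace‖) := by
  classical
  set α := (uᴴ * v).trace with hα
  set β := (uᴴ * w).trace with hβ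
  set γ := (vᴴ * w).trace with hγ
  set G : Matrix (Fin 3) (Fin 3) ℂ :=
    Matrix.of ![![1, α, β], ![(starRingEnd ℂ) α, 1, γ],
      ![(starRingEnd ℂ) β, (starRingEnd ℂ) γ, 1]] with hG
  have hGpsd : G.PosSemidef := by
    refine Matrix.PosSemidef.of_dotProduct_mulVec_nonneg ?_ ?_
    · ext i j
      fin_cases i <;> fin_cases j <;>
        simp [hG, Matrix.conjTranspose_apply]
    · intro x
      have key : star x ⬝ᵥ G *ᵥ x =
          ((x 0 • u + x 1 • v + x 2 • w)ᴴ * (x 0 • u + x 1 • v + x 2 • w)).trace := by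
        simp only [Matrix.conjTranspose_add, Matrix.conjTranspose_smul, Matrix.add_mul,
          Matrix.mul_add, Matrix.smul_mul, Matrix.trace_add, Matrix.trace_smul, smul_smul,
          smul_eq_mul]
        have h1 : (uᴴ * u).trace = 1 := hu
        have h2 : (vᴴ * v).trace = 1 := hv
        have h3 : (wᴴ * w).trace = 1 := hw
        have h4 : (vᴴ * u).trace = (starRingEnd ℂ) α := by rw [hα, trace_conj_herm]
        have h5 : (wᴴ * u).trace = (starRingEnd ℂ) β := by rw [hβ, trace_conj_herm]
        have h6 : (wᴴ * v).trace = (starRingEnd ℂ) γ := by rw [hγ, trace_conj_herm]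
        rw [dotProduct, Fin.sum_univ_three]
        simp only [Matrix.mulVec, dotProduct, Fin.sum_univ_three, Pi.star_apply,
          RCLike.star_def]
        simp only [hG, Matrix.of_apply, Matrix.cons_val_zero, Matrix.cons_val_one,
          Matrix.head_cons, Matrix.cons_val_two, Matrix.tail_cons]
        simp only [Matrix.mul_smul, Matrix.trace_smul, smul_eq_mul]
        rw [h1, h2, h3, h4, h5, h6]
        ring
      rw [key]
      exact psd_trace_nonneg (Matrix.posSemidef_conjTranspose_mul_self _)
  have hdet : 0 ≤ G.det := by
    rw [hGpsd.1.det_eq_prod_eigenvalues]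
    norm_cast
    exact RCLike.ofReal_nonneg.mpr (Finset.prod_nonneg fun i _ => hGpsd.eigenvalues_nonneg i)
  have hre : 0 ≤ (G.det).re := by
    rw [Complex.le_def] at hdet
    simpa using hdet.1
  rw [Matrix.det_fin_three] at hre
  simp only [hG, Matrix.of_apply, Matrix.cons_val_zero, Matrix.cons_val_one, Matrix.head_cons,
    Matrix.cons_val_two, Matrix.tail_cons] at hre
  have e1 : (α * (starRingEnd ℂ) α).re = ‖α‖ ^ 2 := by
    rw [Complex.mul_conj]; simp [Complex.sq_norm]
  have e2 : (β * (starRingEnd ℂ) β).re = ‖β‖ ^ 2 := by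
    rw [Complex.mul_conj]; simp [Complex.sq_norm]
  have e3 : (γ * (starRingEnd ℂ) γ).re = ‖γ‖ ^ 2 := by
    rw [Complex.mul_conj]; simp [Complex.sq_norm]
  have e4 : (α * γ * (starRingEnd ℂ) β).re ≤ ‖α‖ * ‖β‖ * ‖γ‖ := by
    calc (α * γ * (starRingEnd ℂ) β).re ≤ ‖α * γ * (starRingEnd ℂ) β‖ :=
          Complex.re_le_norm _
      _ = ‖α‖ * ‖β‖ * ‖γ‖ := by
          rw [norm_mul, norm_mul,
            Complex.norm_conj]
          ring
  have e5 : (β * (starRingEnd ℂ) α * (starRingEnd ℂ) γ).re = (α * γ * (starRingEnd ℂ) β).re := by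
    have : β * (starRingEnd ℂ) α * (starRingEnd ℂ) γ = (starRingEnd ℂ) (α * γ * (starRingEnd ℂ) β) := by
      simp only [RingHom.map_mul, Complex.conj_conj]
      ring
    rw [this, Complex.conj_re]
  rw [show (1 * 1 * 1 - 1 * γ * (starRingEnd ℂ) γ - α * (starRingEnd ℂ) α * 1 +
      α * γ * (starRingEnd ℂ) β + β * (starRingEnd ℂ) α * (starRingEnd ℂ) γ -
      β * 1 * (starRingEnd ℂ) β) =
      (1 - γ * (starRingEnd ℂ) γ - α * (starRingEnd ℂ) α + α * γ * (starRingEnd ℂ) β +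
        β * (starRingEnd ℂ) α * (starRingEnd ℂ) γ - β * (starRingEnd ℂ) β) from by ring] at hre
  simp only [Complex.sub_re, Complex.add_re, Complex.one_re] at hre
  rw [e1, e2, e3, e5] at hre
  linarith [e4]


-- ### glue lemmas

lemma purif_trace_one {ρ V : Matrix n n ℂ} (h : ρ.PosSemidef) (ht : ρ.trace = 1)
    (hV : V * Vᴴ = 1) :
    ((msqrt ρ * V)ᴴ * (msqrt ρ * V)).trace = 1 := by
  rw [Matrix.conjTranspose_mul, msqrt_herm h, Matrix.mul_assoc,
    ← Matrix.mul_assoc (msqrt ρ) (msqrt ρ) V, msqrt_mul_self h, Matrix.trace_mul_comm,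
    Matrix.mul_assoc, hV, Matrix.mul_one]
  exact ht

lemma fid_eq_tn_sq {ρ σ : Matrix n n ℂ} (hρ : ρ.PosSemidef) (hσ : σ.PosSemidef) :
    fidelity ρ σ = tn (msqrt σ * msqrt ρ) ^ 2 := by
  have hkey : (msqrt σ * msqrt ρ)ᴴ * (msqrt σ * msqrt ρ) = msqrt ρ * σ * msqrt ρ := by
    rw [Matrix.conjTranspose_mul, msqrt_herm hρ, msqrt_herm hσ]
    rw [show msqrt ρ * msqrt σ * (msqrt σ * msqrt ρ) =
      msqrt ρ * (msqrt σ * msqrt σ) * msqrt ρ from by simp only [Matrix.mul_assoc]]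
    rw [msqrt_mul_self hσ]
  unfold fidelity tn
  rw [hkey]

lemma sqrt_fid {ρ σ : Matrix n n ℂ} (hρ : ρ.PosSemidef) (hσ : σ.PosSemidef) :
    Real.sqrt (fidelity ρ σ) = tn (msqrt σ * msqrt ρ) := by
  rw [fid_eq_tn_sq hρ hσ, Real.sqrt_sq (tn_nonneg _)]

lemma fid_symm {ρ σ : Matrix n n ℂ} (hρ : ρ.PosSemidef) (hσ : σ.PosSemidef) :
    fidelity ρ σ = fidelity σ ρ := by
  rw [fid_eq_tn_sq hρ hσ, fid_eq_tn_sq hσ hρ]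
  have : (msqrt σ * msqrt ρ)ᴴ = msqrt ρ * msqrt σ := by
    rw [Matrix.conjTranspose_mul, msqrt_herm hρ, msqrt_herm hσ]
  rw [← this, tn_conjTranspose]

lemma fid_nonneg (ρ σ : Matrix n n ℂ) : 0 ≤ fidelity ρ σ := sq_nonneg _

lemma tn_prod_le_one {ρ σ : Matrix n n ℂ} (hρ : ρ.PosSemidef) (htρ : ρ.trace = 1)
    (hσ : σ.PosSemidef) (htσ : σ.trace = 1) :
    tn (msqrt σ * msqrt ρ) ≤ 1 := by
  set M := msqrt σ * msqrt ρ with hM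
  obtain ⟨V, hV1, hV2, htr⟩ := tn_exists_unitary M
  have habs : ‖(M * V).trace‖ = tn M := by
    rw [htr, Complex.norm_real, Real.norm_of_nonneg (tn_nonneg M)]
  have hMV : M * V = (msqrt σ)ᴴ * (msqrt ρ * V) := by
    rw [msqrt_herm hσ, Matrix.mul_assoc]
  have hcs := trace_cs (msqrt σ) (msqrt ρ * V)
  rw [← hMV] at hcs
  have h1 : ((msqrt σ)ᴴ * msqrt σ).trace = 1 := by
    rw [msqrt_herm hσ, msqrt_mul_self hσ]; exact htσ
  have h2 : ((msqrt ρ * V)ᴴ * (msqrt ρ * V)).trace = 1 := purif_trace_one hρ htρ hV2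
  rw [h1, h2] at hcs
  simp only [Complex.one_re, Real.sqrt_one, mul_one] at hcs
  rw [habs] at hcs
  exact hcs

lemma sqrt_fid_le_one {ρ σ : Matrix n n ℂ} (hρ : ρ.PosSemidef) (htρ : ρ.trace = 1)
    (hσ : σ.PosSemidef) (htσ : σ.trace = 1) :
    Real.sqrt (fidelity ρ σ) ≤ 1 := by
  rw [sqrt_fid hρ hσ]; exact tn_prod_le_one hρ htρ hσ htσ

lemma key_ineq {ρ₁ ρ₂ ρ₃ : Matrix n n ℂ}
    (h₁ : ρ₁.PosSemidef) (h₁t : ρ₁.trace = 1)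
    (h₂ : ρ₂.PosSemidef) (h₂t : ρ₂.trace = 1)
    (h₃ : ρ₃.PosSemidef) (h₃t : ρ₃.trace = 1) :
    Real.sqrt (fidelity ρ₁ ρ₂) - Real.sqrt (fidelity ρ₁ ρ₃) ≤
      Real.sqrt (1 - fidelity ρ₂ ρ₃) := by
  classical
  have hs₁h : (msqrt ρ₁)ᴴ = msqrt ρ₁ := msqrt_herm h₁
  have hs₂h : (msqrt ρ₂)ᴴ = msqrt ρ₂ := msqrt_herm h₂
  have hs₃h : (msqrt ρ₃)ᴴ = msqrt ρ₃ := msqrt_herm h₃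
  obtain ⟨V₂, hV₂1, hV₂2, hNtr⟩ := tn_exists_unitary (msqrt ρ₁ * msqrt ρ₂)
  obtain ⟨W, hW1, hW2, hGtr⟩ := tn_exists_unitary (msqrt ρ₂ * msqrt ρ₃)
  have hV₃1 : (W * V₂)ᴴ * (W * V₂) = 1 := by
    rw [Matrix.conjTranspose_mul, Matrix.mul_assoc, ← Matrix.mul_assoc Wᴴ W V₂, hW1,
      Matrix.one_mul, hV₂1]
  have hV₃2 : (W * V₂) * (W * V₂)ᴴ = 1 := mul_eq_one_comm.mp hV₃1
  -- unit traces
  have hu : ((msqrt ρ₁)ᴴ * msqrt ρ₁).trace = 1 := by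
    rw [hs₁h, msqrt_mul_self h₁]; exact h₁t
  have hv : ((msqrt ρ₂ * V₂)ᴴ * (msqrt ρ₂ * V₂)).trace = 1 := purif_trace_one h₂ h₂t hV₂2
  have hw : ((msqrt ρ₃ * (W * V₂))ᴴ * (msqrt ρ₃ * (W * V₂))).trace = 1 :=
    purif_trace_one h₃ h₃t hV₃2
  -- α
  have hα : ((msqrt ρ₁)ᴴ * (msqrt ρ₂ * V₂)).trace = ((tn (msqrt ρ₁ * msqrt ρ₂) : ℝ) : ℂ) := by
    rw [hs₁h, ← Matrix.mul_assoc]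
    exact hNtr
  have hαval : ‖((msqrt ρ₁)ᴴ * (msqrt ρ₂ * V₂)).trace‖ =
      Real.sqrt (fidelity ρ₁ ρ₂) := by
    rw [hα, Complex.norm_real, Real.norm_of_nonneg (tn_nonneg _)]
    rw [sqrt_fid h₁ h₂]
    have heq : (msqrt ρ₁ * msqrt ρ₂)ᴴ = msqrt ρ₂ * msqrt ρ₁ := by
      rw [Matrix.conjTranspose_mul, hs₁h, hs₂h]
    rw [← heq, tn_conjTranspose]
  -- β
  have hβle : ‖((msqrt ρ₁)ᴴ * (msqrt ρ₃ * (W * V₂))).trace‖ ≤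
      Real.sqrt (fidelity ρ₁ ρ₃) := by
    have hrw : (msqrt ρ₁)ᴴ * (msqrt ρ₃ * (W * V₂)) = (msqrt ρ₁ * msqrt ρ₃) * (W * V₂) := by
      rw [hs₁h, Matrix.mul_assoc]
    rw [hrw]
    have hle := tn_unitary_le (msqrt ρ₁ * msqrt ρ₃) (W * V₂) hV₃1 hV₃2
    rw [sqrt_fid h₁ h₃]
    have heq : (msqrt ρ₁ * msqrt ρ₃)ᴴ = msqrt ρ₃ * msqrt ρ₁ := by
      rw [Matrix.conjTranspose_mul, hs₁h, hs₃h]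
    rw [← heq, tn_conjTranspose]
    exact hle
  -- γ
  have hγ : (((msqrt ρ₂ * V₂))ᴴ * (msqrt ρ₃ * (W * V₂))).trace =
      ((tn (msqrt ρ₂ * msqrt ρ₃) : ℝ) : ℂ) := by
    have hrw : ((msqrt ρ₂ * V₂))ᴴ * (msqrt ρ₃ * (W * V₂)) =
        V₂ᴴ * (msqrt ρ₂ * msqrt ρ₃ * W) * V₂ := by
      rw [Matrix.conjTranspose_mul, hs₂h]
      simp only [Matrix.mul_assoc]
    rw [hrw, Matrix.trace_mul_comm, Matrix.mul_assoc, ← Matrix.mul_assoc V₂ V₂ᴴ _, hV₂2,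
      Matrix.one_mul, ← Matrix.mul_assoc]
    exact hGtr
  have hγval : ‖(((msqrt ρ₂ * V₂))ᴴ * (msqrt ρ₃ * (W * V₂))).trace‖ =
      Real.sqrt (fidelity ρ₂ ρ₃) := by
    rw [hγ, Complex.norm_real, Real.norm_of_nonneg (tn_nonneg _)]
    rw [sqrt_fid h₂ h₃]
    have heq : (msqrt ρ₂ * msqrt ρ₃)ᴴ = msqrt ρ₃ * msqrt ρ₂ := by
      rw [Matrix.conjTranspose_mul, hs₂h, hs₃h]
    rw [← heq, tn_conjTranspose]
  have hgram := gram_ineq (msqrt ρ₁) (msqrt ρ₂ * V₂) (msqrt ρ₃ * (W * V₂)) hu hv hw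
  rw [hαval, hγval] at hgram
  set a := Real.sqrt (fidelity ρ₁ ρ₂) with ha
  set b := ‖((msqrt ρ₁)ᴴ * (msqrt ρ₃ * (W * V₂))).trace‖ with hb
  set c := Real.sqrt (fidelity ρ₂ ρ₃) with hc
  have hc1 : c ≤ 1 := by
    rw [hc, sqrt_fid h₂ h₃]
    have heq : (msqrt ρ₂ * msqrt ρ₃)ᴴ = msqrt ρ₃ * msqrt ρ₂ := by
      rw [Matrix.conjTranspose_mul, hs₂h, hs₃h]
    rw [← heq, tn_conjTranspose]
    exact tn_prod_le_one h₃ h₃t h₂ h₂t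
  have hb0 : 0 ≤ b := norm_nonneg _
  have ha0 : 0 ≤ a := Real.sqrt_nonneg _
  have hc0 : 0 ≤ c := Real.sqrt_nonneg _
  have hsq : (a - b) ^ 2 ≤ 1 - c ^ 2 := by
    nlinarith [mul_nonneg (mul_nonneg ha0 hb0) (sub_nonneg.mpr hc1)]
  have hfinal : a - b ≤ Real.sqrt (1 - c ^ 2) :=
    calc a - b ≤ |a - b| := le_abs_self _
      _ = Real.sqrt ((a - b) ^ 2) := (Real.sqrt_sq_eq_abs _).symm
      _ ≤ Real.sqrt (1 - c ^ 2) := Real.sqrt_le_sqrt hsq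
  have hc2 : c ^ 2 = fidelity ρ₂ ρ₃ := Real.sq_sqrt (fid_nonneg _ _)
  rw [hc2] at hfinal
  linarith [hβle]

end Aux

/-- Continuity of fidelity: `|√F₁₂ − √F₁₃| ≤ √(1 − F₂₃)` and
`|F₁₂ − F₁₃| ≤ 2√(1 − F₂₃)`. -/
theorem fidelity_continuity_estimate {d : ℕ}
    {ρ₁ ρ₂ ρ₃ : Matrix (Fin d) (Fin d) ℂ}
    (h₁ : ρ₁.PosSemidef) (h₁t : ρ₁.trace = 1)
    (h₂ : ρ₂.PosSemidef) (h₂t : ρ₂.trace = 1)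
    (h₃ : ρ₃.PosSemidef) (h₃t : ρ₃.trace = 1) :
    |Real.sqrt (fidelity ρ₁ ρ₂) - Real.sqrt (fidelity ρ₁ ρ₃)| ≤
        Real.sqrt (1 - fidelity ρ₂ ρ₃) ∧
    |fidelity ρ₁ ρ₂ - fidelity ρ₁ ρ₃| ≤ 2 * Real.sqrt (1 - fidelity ρ₂ ρ₃) := by
  have k1 := key_ineq h₁ h₁t h₂ h₂t h₃ h₃t
  have k2 := key_ineq h₁ h₁t h₃ h₃t h₂ h₂t
  rw [fid_symm h₃ h₂] at k2
  have part1 : |Real.sqrt (fidelity ρ₁ ρ₂) - Real.sqrt (fidelity ρ₁ ρ₃)| ≤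
      Real.sqrt (1 - fidelity ρ₂ ρ₃) := abs_sub_le_iff.mpr ⟨k1, k2⟩
  refine ⟨part1, ?_⟩
  have h12 : fidelity ρ₁ ρ₂ = Real.sqrt (fidelity ρ₁ ρ₂) ^ 2 :=
    (Real.sq_sqrt (fid_nonneg _ _)).symm
  have h13 : fidelity ρ₁ ρ₃ = Real.sqrt (fidelity ρ₁ ρ₃) ^ 2 :=
    (Real.sq_sqrt (fid_nonneg _ _)).symm
  have hle12 : Real.sqrt (fidelity ρ₁ ρ₂) ≤ 1 := sqrt_fid_le_one h₁ h₁t h₂ h₂t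
  have hle13 : Real.sqrt (fidelity ρ₁ ρ₃) ≤ 1 := sqrt_fid_le_one h₁ h₁t h₃ h₃t
  have h0 : 0 ≤ Real.sqrt (fidelity ρ₁ ρ₂) := Real.sqrt_nonneg _
  have h0' : 0 ≤ Real.sqrt (fidelity ρ₁ ρ₃) := Real.sqrt_nonneg _
  have hsum : 0 ≤ Real.sqrt (fidelity ρ₁ ρ₂) + Real.sqrt (fidelity ρ₁ ρ₃) := by linarith
  have hdiff : (Real.sqrt (fidelity ρ₁ ρ₂) - Real.sqrt (fidelity ρ₁ ρ₃)) *
        (Real.sqrt (fidelity ρ₁ ρ₂) + Real.sqrt (fidelity ρ₁ ρ₃)) =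
      fidelity ρ₁ ρ₂ - fidelity ρ₁ ρ₃ := by
    have hx : (Real.sqrt (fidelity ρ₁ ρ₂) - Real.sqrt (fidelity ρ₁ ρ₃)) *
        (Real.sqrt (fidelity ρ₁ ρ₂) + Real.sqrt (fidelity ρ₁ ρ₃)) =
        Real.sqrt (fidelity ρ₁ ρ₂) ^ 2 - Real.sqrt (fidelity ρ₁ ρ₃) ^ 2 := by ring
    rw [hx, Real.sq_sqrt (fid_nonneg _ _), Real.sq_sqrt (fid_nonneg _ _)]
  rw [← hdiff, abs_mul, abs_of_nonneg hsum]
  calc |Real.sqrt (fidelity ρ₁ ρ₂) - Real.sqrt (fidelity ρ₁ ρ₃)| *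
        (Real.sqrt (fidelity ρ₁ ρ₂) + Real.sqrt (fidelity ρ₁ ρ₃))
      ≤ Real.sqrt (1 - fidelity ρ₂ ρ₃) * 2 := by
        apply mul_le_mul part1 (by linarith) (by linarith) (Real.sqrt_nonneg _)
    _ = 2 * Real.sqrt (1 - fidelity ρ₂ ρ₃) := by ring
end
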